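/- Let T be a pq-tree over a finite set U with weights w : U → ℤ, and let v be a p-node of T with children c_1, …, c_ℓ. For a node c define g(c) = border(c) − max(total(c), 0), and let b = max_{1 ≤ i ≤ ℓ} g(c_i). Then border(v) = b + Σ_{i=1}^{ℓ} max(total(c_i), 0). -/

import Mathlib

/-- A pq-tree: leaves carry elements of `U`; the children of each internal node
(a p-node or a q-node) are given as a sequence. -/
inductive PQTree (U : Type) : Type where
  | leaf : U → PQTree U
  | pnode : List (PQTree U) → PQTree U
  | qnode : List (PQTree U) → PQTree U

namespace PQTree

variable {U : Type}

/-- The list of leaves below a node, read left to right in the given order. -/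
def leaves : PQTree U → List U
  | leaf u => [u]
  | pnode cs => cs.attach.flatMap (fun c => leaves c.1)
  | qnode cs => cs.attach.flatMap (fun c => leaves c.1)
  decreasing_by
  · have := List.sizeOf_lt_of_mem c.2; simp; omega
  · have := List.sizeOf_lt_of_mem c.2; simp; omega

/-- `total(v) = Σ_{u ∈ leaves(v)} w(u)`. -/
def total (w : U → ℤ) (t : PQTree U) : ℤ :=
  ((leaves t).map w).sum

/-- `IsFrontier t l` holds when `l` is a frontier order of the pq-tree `t`: a linear order
of its leaves obtained by reading the leaves left to right after independently permuting
the children sequence of each p-node arbitrarily and either keeping or reversing the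
children sequence of each q-node. -/
inductive IsFrontier : PQTree U → List U → Prop where
  | leaf (u : U) : IsFrontier (leaf u) [u]
  | pnode (cs cs' : List (PQTree U)) (fs : List (List U)) :
      cs'.Perm cs → List.Forall₂ IsFrontier cs' fs →
      IsFrontier (pnode cs) fs.flatten
  | qnodeKeep (cs : List (PQTree U)) (fs : List (List U)) :
      List.Forall₂ IsFrontier cs fs →
      IsFrontier (qnode cs) fs.flatten
  | qnodeRev (cs : List (PQTree U)) (fs : List (List U)) :
      List.Forall₂ IsFrontier cs.reverse fs →
      IsFrontier (qnode cs) fs.flatten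

variable [DecidableEq U]

/-- `S` is compatible with the pq-tree `t`: some frontier order of `t` has a contiguous
segment whose elements are exactly `S` (in particular `S = ∅` is compatible). -/
def Compatible (S : Finset U) (t : PQTree U) : Prop :=
  ∃ l l₁ l₂ l₃ : List U, IsFrontier t l ∧ l = l₁ ++ l₂ ++ l₃ ∧ l₂.toFinset = S

/-- `S` is border-compatible with the pq-tree `t`: `S` is nonempty and in some frontier
order of `t` the elements of `S` occupy a set of consecutive positions containing the
first or the last position, i.e. `S` is a prefix or a suffix of the frontier. -/
def BorderCompatible (S : Finset U) (t : PQTree U) : Prop :=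
  S.Nonempty ∧ ∃ l l₁ l₂ : List U, IsFrontier t l ∧ l = l₁ ++ l₂ ∧
    (l₁.toFinset = S ∨ l₂.toFinset = S)

/-- `inner(v)`: the maximum of `Σ_{u∈S} w(u)` over all sets `S` compatible with the
subtree at `v` (including `S = ∅`, so `inner(v) ≥ 0`). -/
noncomputable def inner (w : U → ℤ) (t : PQTree U) : ℤ :=
  sSup {z : ℤ | ∃ S : Finset U, Compatible S t ∧ z = ∑ u ∈ S, w u}

/-- `border(v)`: the maximum of `Σ_{u∈S} w(u)` over all (nonempty) sets `S`
border-compatible with the subtree at `v`. -/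
noncomputable def border (w : U → ℤ) (t : PQTree U) : ℤ :=
  sSup {z : ℤ | ∃ S : Finset U, BorderCompatible S t ∧ z = ∑ u ∈ S, w u}

/-- A well-formed pq-tree: every internal node has a nonempty sequence of children
(so every subtree has at least one leaf). -/
inductive Proper : PQTree U → Prop where
  | leaf (u : U) : Proper (leaf u)
  | pnode (cs : List (PQTree U)) : cs ≠ [] → (∀ c ∈ cs, Proper c) → Proper (pnode cs)
  | qnode (cs : List (PQTree U)) : cs ≠ [] → (∀ c ∈ cs, Proper c) → Proper (qnode cs)


set_option linter.unusedSectionVars false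

lemma leaves_pnode (cs : List (PQTree U)) : leaves (pnode cs) = (cs.map leaves).flatten := by
  rw [leaves, List.flatMap_def]
  congr 1
  rw [show (fun c : {x // x ∈ cs} => leaves c.1) = leaves ∘ Subtype.val from rfl,
    ← List.map_map, List.attach_map_subtype_val]

lemma leaves_qnode (cs : List (PQTree U)) : leaves (qnode cs) = (cs.map leaves).flatten := by
  rw [leaves, List.flatMap_def]
  congr 1
  rw [show (fun c : {x // x ∈ cs} => leaves c.1) = leaves ∘ Subtype.val from rfl,
    ← List.map_map, List.attach_map_subtype_val]

lemma forall₂_flatten_perm {cs : List (PQTree U)} {fs : List (List U)}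
    (hf : List.Forall₂ IsFrontier cs fs)
    (IH : ∀ c ∈ cs, ∀ f, IsFrontier c f → f.Perm (leaves c)) :
    fs.flatten.Perm (cs.map leaves).flatten := by
  induction hf with
  | nil => simp
  | @cons a b l₁ l₂ h _ ih =>
    simp only [List.map_cons, List.flatten_cons]
    exact (IH a (List.mem_cons_self) b h).append
      (ih (fun c hc => IH c (List.mem_cons_of_mem _ hc)))

lemma sizeOf_lt_pnode {c : PQTree U} {cs : List (PQTree U)} (hc : c ∈ cs) :
    sizeOf c < sizeOf (pnode cs) := by
  have := List.sizeOf_lt_of_mem hc; simp; omega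

lemma sizeOf_lt_qnode {c : PQTree U} {cs : List (PQTree U)} (hc : c ∈ cs) :
    sizeOf c < sizeOf (qnode cs) := by
  have := List.sizeOf_lt_of_mem hc; simp; omega

lemma frontier_perm_aux (n : ℕ) : ∀ (t : PQTree U), sizeOf t < n →
    ∀ l, IsFrontier t l → l.Perm (leaves t) := by
  induction n with
  | zero => intro t ht; omega
  | succ n ih =>
    intro t ht l h
    cases h with
    | leaf u => rw [leaves]
    | pnode cs cs' fs hperm hf =>
      have IH : ∀ c ∈ cs', ∀ f, IsFrontier c f → f.Perm (leaves c) := fun c hc f hcf =>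
        ih c (by have := sizeOf_lt_pnode (hperm.subset hc); omega) f hcf
      rw [leaves_pnode]
      exact (forall₂_flatten_perm hf IH).trans ((hperm.map leaves).flatten)
    | qnodeKeep cs fs hf =>
      have IH : ∀ c ∈ cs, ∀ f, IsFrontier c f → f.Perm (leaves c) := fun c hc f hcf =>
        ih c (by have := sizeOf_lt_qnode hc; omega) f hcf
      rw [leaves_qnode]
      exact forall₂_flatten_perm hf IH
    | qnodeRev cs fs hf =>
      have IH : ∀ c ∈ cs.reverse, ∀ f, IsFrontier c f → f.Perm (leaves c) := fun c hc f hcf =>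
        ih c (by have := sizeOf_lt_qnode (List.mem_reverse.1 hc); omega) f hcf
      rw [leaves_qnode]
      exact (forall₂_flatten_perm hf IH).trans
        (((cs.reverse_perm).map leaves).flatten)

theorem frontier_perm {t : PQTree U} {l : List U} (h : IsFrontier t l) : l.Perm (leaves t) :=
  frontier_perm_aux (sizeOf t + 1) t (by omega) l h


lemma forall₂_map_map {ι : Type*} (R : PQTree U → List U → Prop) (xs : List ι)
    (f : ι → PQTree U) (g : ι → List U) (h : ∀ x ∈ xs, R (f x) (g x)) :
    List.Forall₂ R (xs.map f) (xs.map g) := by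
  induction xs with
  | nil => exact List.Forall₂.nil
  | cons a l ih =>
    exact List.Forall₂.cons (h a (List.mem_cons_self))
      (ih (fun x hx => h x (List.mem_cons_of_mem _ hx)))

lemma isFrontier_leaves_aux (n : ℕ) : ∀ (t : PQTree U), sizeOf t < n →
    IsFrontier t (leaves t) := by
  induction n with
  | zero => intro t ht; omega
  | succ n ih =>
    intro t ht
    cases t with
    | leaf u => rw [leaves]; exact IsFrontier.leaf u
    | pnode cs =>
      rw [leaves_pnode]
      have h := forall₂_map_map IsFrontier cs id leaves
          (fun x hx => ih x (by have := sizeOf_lt_pnode hx; omega))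
      rw [List.map_id] at h
      exact IsFrontier.pnode cs cs (cs.map leaves) (List.Perm.refl _) h
    | qnode cs =>
      rw [leaves_qnode]
      have h := forall₂_map_map IsFrontier cs id leaves
          (fun x hx => ih x (by have := sizeOf_lt_qnode hx; omega))
      rw [List.map_id] at h
      exact IsFrontier.qnodeKeep cs (cs.map leaves) h

theorem isFrontier_leaves (t : PQTree U) : IsFrontier t (leaves t) :=
  isFrontier_leaves_aux (sizeOf t + 1) t (by omega)

lemma forall₂_rev_map {cs : List (PQTree U)} {fs : List (List U)}
    (hf : List.Forall₂ IsFrontier cs fs)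
    (IH : ∀ c ∈ cs, ∀ f, IsFrontier c f → IsFrontier c f.reverse) :
    List.Forall₂ IsFrontier cs.reverse ((fs.map List.reverse).reverse) := by
  induction hf with
  | nil => exact List.Forall₂.nil
  | @cons a b l₁ l₂ h hf' ih =>
    simp only [List.reverse_cons, List.map_cons]
    exact List.rel_append (ih (fun c hc => IH c (List.mem_cons_of_mem _ hc)))
      (List.Forall₂.cons (IH a (List.mem_cons_self) b h) List.Forall₂.nil)


lemma frontier_reverse_aux (n : ℕ) : ∀ (t : PQTree U), sizeOf t < n →
    ∀ l, IsFrontier t l → IsFrontier t l.reverse := by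
  induction n with
  | zero => intro t ht; omega
  | succ n ih =>
    intro t ht l h
    cases h with
    | leaf u => exact IsFrontier.leaf u
    | pnode cs cs' fs hperm hf =>
      rw [List.reverse_flatten]
      exact IsFrontier.pnode cs cs'.reverse ((fs.map List.reverse).reverse)
        ((cs'.reverse_perm).trans hperm)
        (forall₂_rev_map hf (fun c hc f hcf =>
          ih c (by have := sizeOf_lt_pnode (hperm.subset hc); omega) f hcf))
    | qnodeKeep cs fs hf =>
      rw [List.reverse_flatten]
      exact IsFrontier.qnodeRev cs ((fs.map List.reverse).reverse)
        (forall₂_rev_map hf (fun c hc f hcf =>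
          ih c (by have := sizeOf_lt_qnode hc; omega) f hcf))
    | qnodeRev cs fs hf =>
      rw [List.reverse_flatten]
      have h1 := forall₂_rev_map hf (fun c hc f hcf =>
          ih c (by have := sizeOf_lt_qnode (List.mem_reverse.1 hc); omega) f hcf)
      rw [List.reverse_reverse] at h1
      exact IsFrontier.qnodeKeep cs ((fs.map List.reverse).reverse) h1

theorem frontier_reverse {t : PQTree U} {l : List U} (h : IsFrontier t l) :
    IsFrontier t l.reverse :=
  frontier_reverse_aux (sizeOf t + 1) t (by omega) l h


lemma borderCompatible_subset {S : Finset U} {t : PQTree U} (h : BorderCompatible S t) :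
    S ⊆ (leaves t).toFinset := by
  obtain ⟨hne, l, l₁, l₂, hf, heq, hor⟩ := h
  have hperm : l.toFinset = (leaves t).toFinset :=
    Finset.ext fun a => by simp [List.mem_toFinset, (frontier_perm hf).mem_iff]
  subst heq
  rw [List.toFinset_append] at hperm
  cases hor with
  | inl h => rw [← h, ← hperm]; exact Finset.subset_union_left
  | inr h => rw [← h, ← hperm]; exact Finset.subset_union_right

lemma bset_finite (w : U → ℤ) (t : PQTree U) :
    {z : ℤ | ∃ S : Finset U, BorderCompatible S t ∧ z = ∑ u ∈ S, w u}.Finite := by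
  apply Set.Finite.subset
    (Set.finite_range (fun S : (leaves t).toFinset.powerset => ∑ u ∈ S.1, w u))
  rintro z ⟨S, hS, rfl⟩
  exact ⟨⟨S, Finset.mem_powerset.2 (borderCompatible_subset hS)⟩, rfl⟩

lemma bset_bddAbove (w : U → ℤ) (t : PQTree U) :
    BddAbove {z : ℤ | ∃ S : Finset U, BorderCompatible S t ∧ z = ∑ u ∈ S, w u} :=
  (bset_finite w t).bddAbove

lemma le_border {w : U → ℤ} {S : Finset U} {t : PQTree U} (h : BorderCompatible S t) :
    ∑ u ∈ S, w u ≤ border w t :=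
  le_csSup (bset_bddAbove w t) ⟨S, h, rfl⟩

lemma leaves_ne_nil {t : PQTree U} (h : Proper t) : leaves t ≠ [] := by
  induction h with
  | leaf u => rw [leaves]; simp
  | pnode cs hne hall ih =>
    rw [leaves_pnode]
    obtain ⟨c₀, hc₀⟩ := List.exists_mem_of_ne_nil cs hne
    intro hcon
    rw [List.flatten_eq_nil_iff] at hcon
    exact ih c₀ hc₀ (hcon _ (List.mem_map_of_mem (f := leaves) hc₀))
  | qnode cs hne hall ih =>
    rw [leaves_qnode]
    obtain ⟨c₀, hc₀⟩ := List.exists_mem_of_ne_nil cs hne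
    intro hcon
    rw [List.flatten_eq_nil_iff] at hcon
    exact ih c₀ hc₀ (hcon _ (List.mem_map_of_mem (f := leaves) hc₀))

lemma borderCompatible_leaves {t : PQTree U} (h : Proper t) :
    BorderCompatible (leaves t).toFinset t := by
  refine ⟨?_, leaves t, leaves t, [], isFrontier_leaves t, by simp, Or.inl rfl⟩
  obtain ⟨x, hx⟩ := List.exists_mem_of_ne_nil _ (leaves_ne_nil h)
  exact ⟨x, List.mem_toFinset.2 hx⟩

lemma border_mem (w : U → ℤ) {t : PQTree U} (hp : Proper t) :
    ∃ S : Finset U, BorderCompatible S t ∧ border w t = ∑ u ∈ S, w u := by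
  have h1 : {z : ℤ | ∃ S : Finset U, BorderCompatible S t ∧ z = ∑ u ∈ S, w u}.Nonempty :=
    ⟨∑ u ∈ (leaves t).toFinset, w u, _, borderCompatible_leaves hp, rfl⟩
  exact h1.csSup_mem (bset_finite w t)

lemma total_le_border {w : U → ℤ} {t : PQTree U} (hp : Proper t)
    (hnd : (leaves t).Nodup) : total w t ≤ border w t := by
  have h1 := le_border (w := w) (borderCompatible_leaves hp)
  rwa [List.sum_toFinset w hnd] at h1


lemma flatten_split {α : Type*} : ∀ (fs : List (List α)) (l₁ l₂ : List α),
    l₁ ++ l₂ = fs.flatten →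
    ∃ (fs₁ fs₂ : List (List α)) (p q : List α),
      l₁ = fs₁.flatten ++ p ∧ l₂ = q ++ fs₂.flatten ∧
      (p = [] ∧ q = [] ∧ fs = fs₁ ++ fs₂ ∨ fs = fs₁ ++ (p ++ q) :: fs₂) := by
  intro fs
  induction fs with
  | nil =>
    intro l₁ l₂ h
    rw [List.flatten_nil, List.append_eq_nil_iff] at h
    exact ⟨[], [], [], [], by simp [h.1], by simp [h.2], Or.inl ⟨rfl, rfl, rfl⟩⟩
  | cons f fs' ih =>
    intro l₁ l₂ h
    rw [List.flatten_cons] at h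
    rcases List.append_eq_append_iff.1 h with ⟨a', ha1, ha2⟩ | ⟨c', hc1, hc2⟩
    · exact ⟨[], fs', l₁, a', by simp, ha2, Or.inr (by simp [ha1])⟩
    · obtain ⟨fs₁, fs₂, p, q, h1, h2, h3⟩ := ih c' l₂ hc2.symm
      refine ⟨f :: fs₁, fs₂, p, q, ?_, h2, ?_⟩
      · rw [hc1, h1, List.flatten_cons, List.append_assoc]
      · rcases h3 with ⟨hp, hq, hfs⟩ | hfs
        · exact Or.inl ⟨hp, hq, by rw [hfs, List.cons_append]⟩
        · exact Or.inr (by rw [hfs, List.cons_append])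

lemma forall₂_totals {w : U → ℤ} {cs : List (PQTree U)} {fs : List (List U)}
    (hf : List.Forall₂ IsFrontier cs fs) :
    fs.map (fun f => (f.map w).sum) = cs.map (total w) := by
  induction hf with
  | nil => rfl
  | @cons a b l₁ l₂ h _ ih =>
    simp only [List.map_cons, ih, List.cons.injEq, and_true]
    exact (((frontier_perm h).map w).sum_eq)

lemma sum_map_flatten {w : U → ℤ} (fs : List (List U)) :
    ((fs.flatten).map w).sum = (fs.map (fun f => (f.map w).sum)).sum := by
  induction fs with
  | nil => rfl
  | cons f fs' ih =>
    simp only [List.flatten_cons, List.map_append, List.sum_append, ih, List.map_cons,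
      List.sum_cons]


lemma prefix_sum_le (w : U → ℤ) {ℓ : ℕ} (c : Fin ℓ → PQTree U)
    (hp : Proper (pnode (List.ofFn c))) (hnd : (leaves (pnode (List.ofFn c))).Nodup)
    {l₁ l₂ : List U} (hf : IsFrontier (pnode (List.ofFn c)) (l₁ ++ l₂)) (hne : l₁ ≠ []) :
    ∑ u ∈ l₁.toFinset, w u ≤
      sSup {z : ℤ | ∃ i : Fin ℓ, z = border w (c i) - max (total w (c i)) 0} +
        ∑ i : Fin ℓ, max (total w (c i)) 0 := by
  set Mc : PQTree U → ℤ := fun t => max (total w t) 0 with hMcdef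
  set b : ℤ := sSup {z : ℤ | ∃ i : Fin ℓ, z = border w (c i) - Mc (c i)} with hbdef
  have hsetfin : {z : ℤ | ∃ i : Fin ℓ, z = border w (c i) - Mc (c i)}.Finite := by
    apply Set.Finite.subset (Set.finite_range (fun i : Fin ℓ => border w (c i) - Mc (c i)))
    rintro z ⟨i, rfl⟩; exact ⟨i, rfl⟩
  have hg : ∀ i : Fin ℓ, border w (c i) - Mc (c i) ≤ b :=
    fun i => le_csSup hsetfin.bddAbove ⟨i, rfl⟩
  have hprop : ∀ i : Fin ℓ, Proper (c i) := by
    cases hp with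
    | pnode _ _ hall => exact fun i => hall _ (List.mem_ofFn.2 ⟨i, rfl⟩)
  have hndc : ∀ i : Fin ℓ, (leaves (c i)).Nodup := by
    intro i
    rw [leaves_pnode] at hnd
    exact hnd.sublist (List.sublist_flatten_of_mem
      (List.mem_map_of_mem (f := leaves) (List.mem_ofFn.2 ⟨i, rfl⟩ : c i ∈ List.ofFn c)))
  have hnodup : (l₁ ++ l₂).Nodup := ((frontier_perm hf).nodup_iff).2 hnd
  have hl₁nd : l₁.Nodup := hnodup.sublist (List.sublist_append_left l₁ l₂)
  generalize hL : l₁ ++ l₂ = L at hf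
  cases hf with
  | pnode cs cs' fs hperm hff =>
    have hMc0 : ∀ (L' : List (PQTree U)), 0 ≤ (L'.map Mc).sum := by
      intro L'
      apply List.sum_nonneg
      rintro x hx
      simp only [List.mem_map] at hx
      obtain ⟨t', _, rfl⟩ := hx
      exact le_max_right _ _
    have hsum_all : (cs'.map Mc).sum = ∑ i : Fin ℓ, Mc (c i) := by
      rw [(hperm.map Mc).sum_eq, List.map_ofFn, List.sum_ofFn]
      rfl
    have key : ∀ (csA csB : List (PQTree U)) (e : PQTree U) (i : Fin ℓ), c i = e →
        cs' = csA ++ e :: csB →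
        (csA.map (total w)).sum + border w e ≤ b + ∑ i : Fin ℓ, Mc (c i) := by
      intro csA csB e i hi hcs
      have h1 : (csA.map (total w)).sum ≤ (csA.map Mc).sum :=
        List.sum_le_sum (fun t _ => le_max_left _ _)
      have h2 : (csA.map Mc).sum + Mc e ≤ ∑ i : Fin ℓ, Mc (c i) := by
        rw [← hsum_all, hcs]
        simp only [List.map_append, List.map_cons, List.sum_append, List.sum_cons]
        have := hMc0 csB
        linarith
      have h3 : border w e - Mc e ≤ b := hi ▸ hg i
      linarith
    obtain ⟨fs₁, fs₂, p, q, hpl₁, hql₂, hcase⟩ := flatten_split fs l₁ l₂ hL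
    by_cases hpn : p = []
    · -- the prefix ends exactly at a block boundary
      obtain ⟨rest, hfseq⟩ : ∃ rest, fs = fs₁ ++ rest := by
        rcases hcase with ⟨_, _, h⟩ | h
        exacts [⟨fs₂, h⟩, ⟨(p ++ q) :: fs₂, h⟩]
      subst hfseq
      have h₁ : List.Forall₂ IsFrontier (cs'.take fs₁.length) fs₁ :=
        List.forall₂_take_append cs' fs₁ rest hff
      have hcs' : cs' = cs'.take fs₁.length ++ cs'.drop fs₁.length :=
        (List.take_append_drop _ cs').symm
      set cs₁ := cs'.take fs₁.length with hcs₁def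
      set csR := cs'.drop fs₁.length with hcsRdef
      rw [hpn, List.append_nil] at hpl₁
      have hcs₁ne : cs₁ ≠ [] := by
        intro h0
        rw [h0, List.forall₂_nil_left_iff] at h₁
        exact hne (by rw [hpl₁, h₁]; rfl)
      obtain h0 | ⟨csA, e, hcs₁⟩ := cs₁.eq_nil_or_concat
      · exact absurd h0 hcs₁ne
      rw [List.concat_eq_append] at hcs₁
      have hemem : e ∈ cs' := by
        rw [hcs', hcs₁]
        exact List.mem_append_left _ (List.mem_append_right _ (List.mem_singleton_self e))
      obtain ⟨i, hi⟩ : ∃ i, c i = e := List.mem_ofFn.1 (hperm.subset hemem)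
      have hz : ∑ u ∈ l₁.toFinset, w u = (csA.map (total w)).sum + total w e := by
        rw [List.sum_toFinset w hl₁nd, hpl₁, sum_map_flatten, forall₂_totals h₁, hcs₁,
          List.map_append, List.sum_append]
        simp [List.concat_eq_append]
      rw [hz]
      have htb : total w e ≤ border w e := hi ▸ total_le_border (hprop i) (hndc i)
      exact le_trans (by linarith)
        (key csA csR e i hi (by rw [hcs', hcs₁, List.append_assoc]; rfl))
    · -- the prefix ends strictly inside a block
      have hfseq : fs = fs₁ ++ (p ++ q) :: fs₂ := by
        rcases hcase with ⟨h, _, _⟩ | h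
        · exact absurd h hpn
        · exact h
      subst hfseq
      have h₁ : List.Forall₂ IsFrontier (cs'.take fs₁.length) fs₁ :=
        List.forall₂_take_append cs' fs₁ _ hff
      have h₂ : List.Forall₂ IsFrontier (cs'.drop fs₁.length) ((p ++ q) :: fs₂) :=
        List.forall₂_drop_append cs' fs₁ _ hff
      have hcs' : cs' = cs'.take fs₁.length ++ cs'.drop fs₁.length :=
        (List.take_append_drop _ cs').symm
      set cs₁ := cs'.take fs₁.length with hcs₁def
      set csR := cs'.drop fs₁.length with hcsRdef
      rw [List.forall₂_cons_right_iff] at h₂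
      obtain ⟨d, cs₂, hd, h₂', hcsR⟩ := h₂
      have hdmem : d ∈ cs' := by
        rw [hcs', hcsR]
        exact List.mem_append_right _ (List.mem_cons_self)
      obtain ⟨i, hi⟩ : ∃ i, c i = d := List.mem_ofFn.1 (hperm.subset hdmem)
      have hpnd : p.Nodup := hl₁nd.sublist (by rw [hpl₁]; exact List.sublist_append_right _ _)
      obtain ⟨x, hx⟩ := List.exists_mem_of_ne_nil p hpn
      have hpb : (p.map w).sum ≤ border w d := by
        rw [← List.sum_toFinset w hpnd]
        exact le_border ⟨⟨x, List.mem_toFinset.2 hx⟩, p ++ q, p, q, hd, rfl, Or.inl rfl⟩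
      have hz : ∑ u ∈ l₁.toFinset, w u = (cs₁.map (total w)).sum + (p.map w).sum := by
        rw [List.sum_toFinset w hl₁nd, hpl₁, List.map_append, List.sum_append,
          sum_map_flatten, forall₂_totals h₁]
      rw [hz]
      exact le_trans (by linarith) (key cs₁ cs₂ d i hi (by rw [hcs', hcsR]))


theorem border_pnode' {U : Type} [DecidableEq U] (w : U → ℤ) (ℓ : ℕ) (hℓ : 1 ≤ ℓ)
    (c : Fin ℓ → PQTree U) (hp : Proper (pnode (List.ofFn c)))
    (hnd : (leaves (pnode (List.ofFn c))).Nodup) :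
    border w (pnode (List.ofFn c)) =
      sSup {z : ℤ | ∃ i : Fin ℓ, z = border w (c i) - max (total w (c i)) 0} +
        ∑ i : Fin ℓ, max (total w (c i)) 0 := by
  have hprop : ∀ i : Fin ℓ, Proper (c i) := by
    cases hp with
    | pnode _ _ hall => exact fun i => hall _ (List.mem_ofFn.2 ⟨i, rfl⟩)
  have hndc : ∀ i : Fin ℓ, (leaves (c i)).Nodup := by
    intro i
    rw [leaves_pnode] at hnd
    exact hnd.sublist (List.sublist_flatten_of_mem
      (List.mem_map_of_mem (f := leaves) (List.mem_ofFn.2 ⟨i, rfl⟩ : c i ∈ List.ofFn c)))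
  have hsetfin : {z : ℤ | ∃ i : Fin ℓ, z = border w (c i) - max (total w (c i)) 0}.Finite := by
    apply Set.Finite.subset
      (Set.finite_range (fun i : Fin ℓ => border w (c i) - max (total w (c i)) 0))
    rintro z ⟨i, rfl⟩; exact ⟨i, rfl⟩
  -- the index attaining the sup
  obtain ⟨i₀, hb⟩ : ∃ i₀ : Fin ℓ,
      sSup {z : ℤ | ∃ i : Fin ℓ, z = border w (c i) - max (total w (c i)) 0} =
        border w (c i₀) - max (total w (c i₀)) 0 := by
    have hne : {z : ℤ | ∃ i : Fin ℓ, z = border w (c i) - max (total w (c i)) 0}.Nonempty :=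
      ⟨border w (c ⟨0, hℓ⟩) - max (total w (c ⟨0, hℓ⟩)) 0, ⟨0, hℓ⟩, rfl⟩
    exact hne.csSup_mem hsetfin
  apply le_antisymm
  · -- upper bound
    apply csSup_le
    · exact ⟨∑ u ∈ (leaves (pnode (List.ofFn c))).toFinset, w u, _,
        borderCompatible_leaves hp, rfl⟩
    rintro z ⟨S, ⟨hSne, l, l₁, l₂, hf, rfl, hor⟩, rfl⟩
    cases hor with
    | inl h =>
      have hne1 : l₁ ≠ [] := by
        intro h0; rw [h0] at h; simp at h; rw [← h] at hSne
        exact absurd hSne (by simp)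
      rw [← h]
      exact prefix_sum_le w c hp hnd hf hne1
    | inr h =>
      have hf' := frontier_reverse hf
      rw [List.reverse_append] at hf'
      have hne2 : l₂.reverse ≠ [] := by
        intro h0
        rw [List.reverse_eq_nil_iff] at h0
        rw [h0] at h; simp at h; rw [← h] at hSne
        exact absurd hSne (by simp)
      rw [← h, ← List.toFinset_reverse]
      exact prefix_sum_le w c hp hnd hf' hne2
  · -- lower bound: construct an achieving border-compatible set
    obtain ⟨S₀, hBC, hsum⟩ := border_mem w (hprop i₀)
    obtain ⟨hS₀ne, lc, la', lb', hfc', hlceq, hor⟩ := hBC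
    subst hlceq
    -- arrange so that `S₀` is a suffix
    obtain ⟨la, lb, hfc, hlb⟩ : ∃ la lb : List U,
        IsFrontier (c i₀) (la ++ lb) ∧ lb.toFinset = S₀ := by
      cases hor with
      | inr h => exact ⟨la', lb', hfc', h⟩
      | inl h =>
        have := frontier_reverse hfc'
        rw [List.reverse_append] at this
        exact ⟨lb'.reverse, la'.reverse, this, by rw [List.toFinset_reverse]; exact h⟩
    set K : List (Fin ℓ) := (List.finRange ℓ).erase i₀ with hK
    set pB : Fin ℓ → Bool := fun j => decide (total w (c j) < 0) with hpB
    set negJ : List (Fin ℓ) := K.filter pB with hnegJ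
    set posJ : List (Fin ℓ) := K.filter (fun j => !pB j) with hposJ
    have hpermidx : (negJ ++ i₀ :: posJ).Perm (List.finRange ℓ) :=
      List.perm_middle.trans ((List.Perm.cons i₀ (List.filter_append_perm pB K)).trans
        (List.perm_cons_erase (List.mem_finRange i₀)).symm)
    set cs' : List (PQTree U) := negJ.map c ++ c i₀ :: posJ.map c with hcs'
    have hpermcs : cs'.Perm (List.ofFn c) := by
      have h1 : cs' = (negJ ++ i₀ :: posJ).map c := by
        simp [hcs', List.map_append]
      rw [h1, List.ofFn_eq_map]
      exact hpermidx.map c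
    set fs : List (List U) :=
      negJ.map (fun j => leaves (c j)) ++ (la ++ lb) :: posJ.map (fun j => leaves (c j))
      with hfs
    have hforall : List.Forall₂ IsFrontier cs' fs :=
      List.rel_append
        (forall₂_map_map IsFrontier negJ c (fun j => leaves (c j))
          (fun j _ => isFrontier_leaves (c j)))
        (List.Forall₂.cons hfc
          (forall₂_map_map IsFrontier posJ c (fun j => leaves (c j))
            (fun j _ => isFrontier_leaves (c j))))
    have hfront : IsFrontier (pnode (List.ofFn c)) fs.flatten :=
      IsFrontier.pnode _ cs' fs hpermcs hforall
    set negFlat : List U := (negJ.map (fun j => leaves (c j))).flatten with hnegFlat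
    set posFlat : List U := (posJ.map (fun j => leaves (c j))).flatten with hposFlat
    have hflat : fs.flatten = (negFlat ++ la) ++ (lb ++ posFlat) := by
      simp [hfs, hnegFlat, hposFlat, List.flatten_append, List.flatten_cons, List.append_assoc]
    rw [hflat] at hfront
    obtain ⟨x, hx⟩ := hS₀ne
    have hxlb : x ∈ lb := List.mem_toFinset.1 (hlb ▸ hx)
    have hBCS : BorderCompatible (lb ++ posFlat).toFinset (pnode (List.ofFn c)) :=
      ⟨⟨x, List.mem_toFinset.2 (List.mem_append_left _ hxlb)⟩,
        (negFlat ++ la) ++ (lb ++ posFlat), negFlat ++ la, lb ++ posFlat, hfront, rfl,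
        Or.inr rfl⟩
    -- compute the weight of this set
    have hnodupl : ((negFlat ++ la) ++ (lb ++ posFlat)).Nodup :=
      ((frontier_perm hfront).nodup_iff).2 hnd
    have hlbpnd : (lb ++ posFlat).Nodup := hnodupl.sublist (List.sublist_append_right _ _)
    have hlbnd : lb.Nodup := hlbpnd.sublist (List.sublist_append_left _ _)
    have hval : ∑ u ∈ (lb ++ posFlat).toFinset, w u =
        border w (c i₀) + (posJ.map (fun j => total w (c j))).sum := by
      rw [List.sum_toFinset w hlbpnd, List.map_append, List.sum_append]
      congr 1
      · rw [← List.sum_toFinset w hlbnd, hlb, hsum]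
      · rw [hposFlat, sum_map_flatten, List.map_map]
        congr 1
    have hposval : (posJ.map (fun j => total w (c j))).sum =
        (∑ i : Fin ℓ, max (total w (c i)) 0) - max (total w (c i₀)) 0 := by
      have h1 : posJ.map (fun j => total w (c j)) = posJ.map (fun j => max (total w (c j)) 0) := by
        apply List.map_congr_left
        intro j hj
        rw [hposJ, List.mem_filter] at hj
        have := hj.2
        simp only [hpB, Bool.not_eq_true', decide_eq_false_iff_not, not_lt] at this
        exact (max_eq_left this).symm
      have h2 : (negJ.map (fun j => max (total w (c j)) 0)).sum = 0 := by
        apply List.sum_eq_zero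
        intro z hz
        rw [List.mem_map] at hz
        obtain ⟨j, hj, rfl⟩ := hz
        rw [hnegJ, List.mem_filter] at hj
        have := hj.2
        simp only [hpB, decide_eq_true_eq] at this
        exact max_eq_right this.le
      have h3 : ((negJ ++ i₀ :: posJ).map (fun j => max (total w (c j)) 0)).sum =
          ((List.finRange ℓ).map (fun j => max (total w (c j)) 0)).sum :=
        (hpermidx.map _).sum_eq
      rw [List.map_append, List.sum_append, List.map_cons, List.sum_cons, h2] at h3
      rw [h1]
      rw [Fin.sum_univ_def]
      linarith
    have hfinal : border w (c i₀) + (posJ.map (fun j => total w (c j))).sum =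
        sSup {z : ℤ | ∃ i : Fin ℓ, z = border w (c i) - max (total w (c i)) 0} +
          ∑ i : Fin ℓ, max (total w (c i)) 0 := by
      rw [hposval, hb]; ring
    calc sSup {z : ℤ | ∃ i : Fin ℓ, z = border w (c i) - max (total w (c i)) 0} +
          ∑ i : Fin ℓ, max (total w (c i)) 0
        = ∑ u ∈ (lb ++ posFlat).toFinset, w u := by rw [hval, hfinal]
      _ ≤ border w (pnode (List.ofFn c)) := le_border hBCS


/-- **Lemma: `border` at a p-node.** For a p-node `v` with children
`c_1, …, c_ℓ`, writing `g(c) = border(c) − max(total(c), 0)` and `b = max_i g(c_i)`,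
`border(v) = b + Σ_i max(total(c_i), 0)`. -/
theorem border_pnode {U : Type} [DecidableEq U] (w : U → ℤ) (ℓ : ℕ) (hℓ : 1 ≤ ℓ)
    (c : Fin ℓ → PQTree U) (hp : Proper (pnode (List.ofFn c)))
    (hnd : (leaves (pnode (List.ofFn c))).Nodup) :
    border w (pnode (List.ofFn c)) =
      sSup {z : ℤ | ∃ i : Fin ℓ, z = border w (c i) - max (total w (c i)) 0} +
        ∑ i : Fin ℓ, max (total w (c i)) 0 := by
  exact border_pnode' w ℓ hℓ c hp hnd

end PQTree
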